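/- (Nested/Matryoshka optimality.) Let H_r ∈ ℝ^{L×k_r} have full column rank, H_p ∈ ℝ^{L×k_p} with k_r < k_p ≤ L, W* = (H_rᵀH_r)⁻¹H_rᵀH_p, and R = H_p − H_rW* with SVD R = UΣVᵀ. For each m with 1 ≤ m ≤ k_p − k_r, let H_res^{(m)} = R V_m where V_m consists of the first m columns of V. Then for every X ∈ ℝ^{L×m}, min over A ∈ ℝ^{(k_r+m)×k_p} of ‖H_p − [H_r, H_res^{(m)}]A‖_F² ≤ min over A ∈ ℝ^{(k_r+m)×k_p} of ‖H_p − [H_r, X]A‖_F²; moreover H_res^{(m)} equals the first m columns of H_res^{(m')} for every m' ≥ m, so each prefix of the reverse-distilled embedding is itself an optimal representation at its dimension. -/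

import Mathlib

open Matrix

/-- Squared Frobenius norm of a real matrix: ‖M‖_F² = trace(MᵀM). -/
noncomputable def frobSq {m n : ℕ} (M : Matrix (Fin m) (Fin n) ℝ) : ℝ :=
  Matrix.trace (Mᵀ * M)

/-- The `L × k` rectangular diagonal matrix with diagonal entries `σ 0, σ 1, …`. -/
noncomputable def rectDiag (L k : ℕ) (σ : ℕ → ℝ) : Matrix (Fin L) (Fin k) ℝ :=
  Matrix.of fun i j => if (i : ℕ) = (j : ℕ) then σ (i : ℕ) else 0

lemma frobSq_eq_sum {m n : ℕ} (M : Matrix (Fin m) (Fin n) ℝ) :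
    frobSq M = ∑ j, ∑ i, M i j ^ 2 := by
  simp [frobSq, Matrix.trace, Matrix.diag, Matrix.mul_apply, sq]

lemma frobSq_nonneg {m n : ℕ} (M : Matrix (Fin m) (Fin n) ℝ) : 0 ≤ frobSq M := by
  rw [frobSq_eq_sum]; positivity

lemma frobSq_transpose {m n : ℕ} (M : Matrix (Fin m) (Fin n) ℝ) :
    frobSq Mᵀ = frobSq M := by
  rw [frobSq, frobSq, Matrix.transpose_transpose, Matrix.trace_mul_comm]

lemma frobSq_mul_orth_left {L k : ℕ} (U : Matrix (Fin L) (Fin L) ℝ)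
    (hU : Uᵀ * U = 1) (M : Matrix (Fin L) (Fin k) ℝ) :
    frobSq (U * M) = frobSq M := by
  rw [frobSq, Matrix.transpose_mul, Matrix.mul_assoc, ← Matrix.mul_assoc Uᵀ, hU,
    Matrix.one_mul, ← frobSq]

lemma frobSq_mul_orth_right {L k : ℕ} (V : Matrix (Fin k) (Fin k) ℝ)
    (hV : Vᵀ * V = 1) (M : Matrix (Fin L) (Fin k) ℝ) :
    frobSq (M * Vᵀ) = frobSq M := by
  rw [← frobSq_transpose, Matrix.transpose_mul, Matrix.transpose_transpose,
    frobSq, Matrix.transpose_mul, Matrix.mul_assoc, ← Matrix.mul_assoc Vᵀ, hV,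
    Matrix.one_mul, ← frobSq, frobSq_transpose]

lemma frobSq_proj_le {L k : ℕ} (P : Matrix (Fin L) (Fin L) ℝ)
    (hPs : Pᵀ = P) (hPi : P * P = P) (M : Matrix (Fin L) (Fin k) ℝ) :
    frobSq M = frobSq (P * M) + frobSq ((1 - P) * M) := by
  have hQs : (1 - P)ᵀ = 1 - P := by rw [Matrix.transpose_sub, Matrix.transpose_one, hPs]
  have hQi : (1 - P) * (1 - P) = 1 - P := by
    rw [Matrix.sub_mul, Matrix.mul_sub, Matrix.mul_sub, Matrix.one_mul, Matrix.mul_one,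
      Matrix.one_mul, hPi]
    abel
  rw [frobSq, frobSq, frobSq, Matrix.transpose_mul, Matrix.transpose_mul, hPs, hQs]
  rw [Matrix.mul_assoc Mᵀ, ← Matrix.mul_assoc P, hPi]
  rw [Matrix.mul_assoc Mᵀ, ← Matrix.mul_assoc (1-P), hQi]
  rw [Matrix.sub_mul, Matrix.one_mul, Matrix.mul_sub, Matrix.trace_sub]
  ring

lemma frobSq_mul_proj_le {L k : ℕ} (M : Matrix (Fin L) (Fin k) ℝ)
    (S : Matrix (Fin k) (Fin k) ℝ) (hPs : Sᵀ = S) (hPi : S * S = S) :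
    frobSq (M * S) ≤ frobSq M := by
  have h := frobSq_proj_le S hPs hPi Mᵀ
  have h2 := frobSq_nonneg ((1 - S) * Mᵀ)
  have e1 : frobSq (S * Mᵀ) = frobSq (M * S) := by
    rw [← frobSq_transpose (M * S), Matrix.transpose_mul, hPs]
  rw [← frobSq_transpose M]
  linarith [e1 ▸ h]

open Matrix

lemma exists_orthonormal_cols {kp m : ℕ} (N : Matrix (Fin m) (Fin kp) ℝ) :
    ∃ (d : ℕ) (Q : Matrix (Fin kp) (Fin d) ℝ),
      kp - m ≤ d ∧ Qᵀ * Q = 1 ∧ N * Q = 0 := by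
  classical
  set E := EuclideanSpace ℝ (Fin kp)
  let f : E →ₗ[ℝ] (Fin m → ℝ) :=
    N.mulVecLin ∘ₗ (WithLp.linearEquiv 2 ℝ (Fin kp → ℝ)).toLinearMap
  set K := LinearMap.ker f with hK
  set d := Module.finrank ℝ K with hd
  have hrange : Module.finrank ℝ (LinearMap.range f) ≤ m := by
    have := Submodule.finrank_le (LinearMap.range f)
    simpa using this
  have hrn : Module.finrank ℝ (LinearMap.range f) + d = kp := by
    rw [hd, LinearMap.finrank_range_add_finrank_ker f]
    simp [E]
  have hdge : kp - m ≤ d := by omega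
  let b := stdOrthonormalBasis ℝ K
  let Q : Matrix (Fin kp) (Fin d) ℝ := Matrix.of fun i j => ((b j : E) i)
  refine ⟨d, Q, hdge, ?_, ?_⟩
  · ext j j'
    have hob := b.orthonormal
    rw [orthonormal_iff_ite] at hob
    have h1 : (inner ℝ (b j) (b j') : ℝ) = if j = j' then (1:ℝ) else 0 := hob j j'
    rw [Submodule.coe_inner] at h1
    have h2 : (inner ℝ ((b j : E)) ((b j' : E)) : ℝ) = ∑ i, (b j : E) i * (b j' : E) i := by
      rw [PiLp.inner_apply]
      simp [RCLike.inner_apply]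
      exact Finset.sum_congr rfl fun i _ => mul_comm _ _
    rw [h2] at h1
    simp only [Matrix.mul_apply, Matrix.transpose_apply, Matrix.one_apply, Q, Matrix.of_apply]
    rw [← h1]
  · ext r j
    have hker : f (b j) = 0 := (b j).2
    have : N.mulVec (fun i => (b j : E) i) = 0 := by
      have : f (b j) = N.mulVec (fun i => (b j : E) i) := rfl
      rw [← this, hker]
    simp only [Matrix.mul_apply, Matrix.zero_apply, Q, Matrix.of_apply]
    calc ∑ i, N r i * (b j : E) i = N.mulVec (fun i => (b j : E) i) r := by
          simp [Matrix.mulVec, dotProduct]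
      _ = 0 := by rw [this]; rfl

open Matrix Finset

lemma scalar_min {kp m : ℕ} (hm : m ≤ kp) (a p : ℕ → ℝ)
    (ha : ∀ i j, i ≤ j → a j ≤ a i) (ha0 : ∀ i, 0 ≤ a i)
    (hp0 : ∀ i, 0 ≤ p i) (hp1 : ∀ i, p i ≤ 1)
    (hsum : (kp : ℝ) - m ≤ ∑ i ∈ Finset.range kp, p i) :
    ∑ i ∈ Finset.range kp, (if m ≤ i then a i else 0)
      ≤ ∑ i ∈ Finset.range kp, a i * p i := by
  have hsplit : ∀ g : ℕ → ℝ, ∑ i ∈ Finset.range kp, g i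
      = ∑ i ∈ Finset.range m, g i + ∑ i ∈ Finset.Ico m kp, g i := by
    intro g
    rw [Finset.range_eq_Ico, ← Finset.sum_Ico_consecutive _ (Nat.zero_le m) hm,
      ← Finset.range_eq_Ico]
  -- LHS = ∑_{Ico m kp} a i
  have hLHS : ∑ i ∈ Finset.range kp, (if m ≤ i then a i else 0)
      = ∑ i ∈ Finset.Ico m kp, a i := by
    rw [hsplit]
    have h1 : ∑ i ∈ Finset.range m, (if m ≤ i then a i else 0) = 0 := by
      apply Finset.sum_eq_zero
      intro i hi
      rw [Finset.mem_range] at hi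
      rw [if_neg (by omega)]
    have h2 : ∑ i ∈ Finset.Ico m kp, (if m ≤ i then a i else 0)
        = ∑ i ∈ Finset.Ico m kp, a i := by
      apply Finset.sum_congr rfl
      intro i hi
      rw [Finset.mem_Ico] at hi
      rw [if_pos hi.1]
    rw [h1, h2, zero_add]
  rw [hLHS, hsplit]
  -- bound the tail
  have key1 : ∑ i ∈ Finset.Ico m kp, a i * (1 - p i)
      ≤ a m * ∑ i ∈ Finset.Ico m kp, (1 - p i) := by
    rw [Finset.mul_sum]
    apply Finset.sum_le_sum
    intro i hi
    rw [Finset.mem_Ico] at hi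
    exact mul_le_mul_of_nonneg_right (ha m i hi.1) (by linarith [hp1 i])
  have hcard : ∑ i ∈ Finset.Ico m kp, (1 - p i)
      = (kp : ℝ) - m - ∑ i ∈ Finset.Ico m kp, p i := by
    rw [Finset.sum_sub_distrib, Finset.sum_const, Nat.card_Ico, nsmul_eq_mul, mul_one,
      Nat.cast_sub hm]
  have hsum2 : ∑ i ∈ Finset.range kp, p i
      = ∑ i ∈ Finset.range m, p i + ∑ i ∈ Finset.Ico m kp, p i := hsplit p
  have key2 : (kp : ℝ) - m - ∑ i ∈ Finset.Ico m kp, p i ≤ ∑ i ∈ Finset.range m, p i := by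
    linarith
  have key3 : a m * ∑ i ∈ Finset.range m, p i ≤ ∑ i ∈ Finset.range m, a i * p i := by
    rw [Finset.mul_sum]
    apply Finset.sum_le_sum
    intro i hi
    rw [Finset.mem_range] at hi
    exact mul_le_mul_of_nonneg_right (ha i m (by omega)) (hp0 i)
  have expand : ∑ i ∈ Finset.Ico m kp, a i
      = ∑ i ∈ Finset.Ico m kp, a i * p i + ∑ i ∈ Finset.Ico m kp, a i * (1 - p i) := by
    rw [← Finset.sum_add_distrib]
    apply Finset.sum_congr rfl
    intro i _
    ring
  have ham : 0 ≤ a m := ha0 m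
  nlinarith [key1, key2, key3, expand, hcard,
    mul_le_mul_of_nonneg_left key2 ham]

noncomputable def emb (a b : ℕ) : Matrix (Fin a) (Fin b) ℝ :=
  Matrix.of fun i j => if (i : ℕ) = (j : ℕ) then 1 else 0

lemma emb_tr_mul_emb {a b : ℕ} (h : b ≤ a) : (emb a b)ᵀ * emb a b = 1 := by
  ext j j'
  have hc : ∀ i : Fin a, ((i:ℕ) = (j:ℕ)) ↔ i = Fin.castLE h j := by
    intro i; rw [Fin.ext_iff]; simp
  simp only [Matrix.mul_apply, Matrix.transpose_apply, emb, Matrix.of_apply]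
  rw [Finset.sum_eq_single (Fin.castLE h j)]
  · simp only [Fin.coe_castLE, Matrix.one_apply]
    split_ifs <;> simp_all [Fin.ext_iff]
  · intro i _ hi
    rw [if_neg fun hc' => hi ((hc i).mp hc'), zero_mul]
  · intro habs; exact absurd (Finset.mem_univ _) habs

lemma submatrix_eq_mul_emb {n a b : ℕ} (M : Matrix (Fin n) (Fin a) ℝ) (h : b ≤ a) :
    M.submatrix id (Fin.castLE h) = M * emb a b := by
  ext i j
  simp only [Matrix.submatrix_apply, id_eq, Matrix.mul_apply, emb, Matrix.of_apply]
  rw [Finset.sum_eq_single (Fin.castLE h j)]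
  · rw [if_pos (by simp), mul_one]
  · intro t _ ht
    rw [if_neg (fun hc => ht (Fin.ext (by simpa using hc))), mul_zero]
  · intro habs; exact absurd (Finset.mem_univ _) habs

lemma rectDiag_eq_emb_mul {L k : ℕ} (σ : ℕ → ℝ) :
    rectDiag L k σ = emb L k * Matrix.diagonal (fun j : Fin k => σ (j : ℕ)) := by
  ext i j
  rw [Matrix.mul_apply]
  rw [Finset.sum_eq_single j]
  · simp only [Matrix.diagonal_apply_eq, emb, Matrix.of_apply, rectDiag]
    by_cases hij : (i : ℕ) = (j : ℕ)
    · rw [if_pos hij, if_pos hij, hij, one_mul]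
    · rw [if_neg hij, if_neg hij, zero_mul]
  · intro t _ ht
    rw [Matrix.diagonal_apply_ne _ ht, mul_zero]
  · intro habs; exact absurd (Finset.mem_univ _) habs

lemma rectDiag_mul_emb {L kp m : ℕ} (hmk : m ≤ kp) (σ : ℕ → ℝ) :
    rectDiag L kp σ * emb kp m = rectDiag L m σ := by
  ext i j
  rw [Matrix.mul_apply, Finset.sum_eq_single (Fin.castLE hmk j)]
  · by_cases hij : (i : ℕ) = (j : ℕ) <;> simp [rectDiag, emb, hij]
  · intro t _ ht
    simp only [emb, Matrix.of_apply]
    rw [if_neg (fun hc => ht (Fin.ext (by simpa using hc))), mul_zero]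
  · intro habs; exact absurd (Finset.mem_univ _) habs

lemma rectDiag_sub_mul_embT {L kp m : ℕ} (σ : ℕ → ℝ) :
    rectDiag L kp σ - rectDiag L m σ * (emb kp m)ᵀ
      = rectDiag L kp (fun i => if i < m then 0 else σ i) := by
  ext i j
  rw [Matrix.sub_apply, Matrix.mul_apply]
  by_cases hjm : (j : ℕ) < m
  · rw [Finset.sum_eq_single (⟨(j : ℕ), hjm⟩ : Fin m)]
    · simp only [rectDiag, emb, Matrix.of_apply, Matrix.transpose_apply, Fin.val_mk]
      split_ifs <;> (try ring) <;> (try omega) <;> simp_all <;> omega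
    · intro t _ ht
      simp only [emb, Matrix.of_apply, Matrix.transpose_apply]
      rw [if_neg (fun hc => ht (Fin.ext (by simpa using hc.symm))), mul_zero]
    · intro habs; exact absurd (Finset.mem_univ _) habs
  · have hz : ∀ t : Fin m, rectDiag L m σ i t * (emb kp m)ᵀ t j = 0 := by
      intro t
      simp only [emb, Matrix.of_apply, Matrix.transpose_apply]
      rw [if_neg (fun hc => hjm (lt_of_eq_of_lt hc t.isLt)), mul_zero]
    rw [Finset.sum_eq_zero fun t _ => hz t, sub_zero]
    simp only [rectDiag, Matrix.of_apply]
    split_ifs <;> (try rfl) <;> omega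

lemma frobSq_diag_mul {kp d : ℕ} (dv : Fin kp → ℝ) (Q : Matrix (Fin kp) (Fin d) ℝ) :
    frobSq (Matrix.diagonal dv * Q) = ∑ i : Fin kp, dv i ^ 2 * ∑ j : Fin d, Q i j ^ 2 := by
  have : ∀ i j, (Matrix.diagonal dv * Q) i j = dv i * Q i j := by
    intro i j; rw [Matrix.diagonal_mul]
  rw [frobSq_eq_sum]
  simp_rw [this, mul_pow]
  rw [Finset.sum_comm]
  simp_rw [← Finset.mul_sum]

lemma frobSq_mul_semiorth_left {L k n : ℕ} (U : Matrix (Fin L) (Fin k) ℝ)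
    (hU : Uᵀ * U = 1) (M : Matrix (Fin k) (Fin n) ℝ) :
    frobSq (U * M) = frobSq M := by
  rw [frobSq, Matrix.transpose_mul, Matrix.mul_assoc, ← Matrix.mul_assoc Uᵀ, hU,
    Matrix.one_mul, ← frobSq]

lemma frobSq_eq_trace_self_mul_transpose {a b : ℕ} (M : Matrix (Fin a) (Fin b) ℝ) :
    frobSq M = Matrix.trace (M * Mᵀ) := by
  rw [frobSq, Matrix.trace_mul_comm]

lemma frobSq_mul_semiorth_le {L k d : ℕ} (M : Matrix (Fin L) (Fin k) ℝ)
    (Q : Matrix (Fin k) (Fin d) ℝ) (hQ : Qᵀ * Q = 1) :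
    frobSq (M * Q) ≤ frobSq M := by
  have hSs : (Q * Qᵀ)ᵀ = Q * Qᵀ := by rw [Matrix.transpose_mul, Matrix.transpose_transpose]
  have hSi : (Q * Qᵀ) * (Q * Qᵀ) = Q * Qᵀ := by
    rw [Matrix.mul_assoc, ← Matrix.mul_assoc Qᵀ, hQ, Matrix.one_mul]
  have he : frobSq (M * Q) = frobSq (M * (Q * Qᵀ)) := by
    rw [frobSq_eq_trace_self_mul_transpose, frobSq_eq_trace_self_mul_transpose,
      Matrix.transpose_mul, Matrix.transpose_mul, hSs]
    congr 1
    simp only [Matrix.mul_assoc]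
    rw [← Matrix.mul_assoc Qᵀ Q (Qᵀ * Mᵀ), hQ, Matrix.one_mul]
  rw [he]
  have := frobSq_proj_le (Q * Qᵀ) hSs hSi Mᵀ
  have h2 := frobSq_nonneg ((1 - Q * Qᵀ) * Mᵀ)
  have e1 : frobSq ((Q * Qᵀ) * Mᵀ) = frobSq (M * (Q * Qᵀ)) := by
    rw [← frobSq_transpose (M * (Q * Qᵀ)), Matrix.transpose_mul, hSs]
  rw [← frobSq_transpose M]
  linarith [e1 ▸ this]

lemma eckart_young_diag {L kp mm : ℕ} (hL : kp ≤ L) (σ : ℕ → ℝ) (hσ : Antitone σ)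
    (hσ0 : ∀ i, 0 ≤ σ i) (hmkp : mm ≤ kp)
    (G : Matrix (Fin L) (Fin mm) ℝ) (N : Matrix (Fin mm) (Fin kp) ℝ) :
    ∑ i ∈ Finset.range kp, (if mm ≤ i then σ i ^ 2 else 0)
      ≤ frobSq (rectDiag L kp σ - G * N) := by
  classical
  obtain ⟨d, Q, hd, hQ, hNQ⟩ := exists_orthonormal_cols N
  set M := rectDiag L kp σ - G * N with hM
  have hMQ : M * Q = rectDiag L kp σ * Q := by
    rw [hM, Matrix.sub_mul, Matrix.mul_assoc, hNQ, Matrix.mul_zero, sub_zero]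
  have h1 : frobSq (M * Q) ≤ frobSq M := frobSq_mul_semiorth_le M Q hQ
  rw [hMQ] at h1
  -- compute frobSq (rectDiag * Q)
  have h2 : frobSq (rectDiag L kp σ * Q)
      = ∑ i : Fin kp, σ (i : ℕ) ^ 2 * ∑ j : Fin d, Q i j ^ 2 := by
    rw [rectDiag_eq_emb_mul, Matrix.mul_assoc,
      frobSq_mul_semiorth_left (emb L kp) (emb_tr_mul_emb hL), frobSq_diag_mul]
  -- row-sum facts
  set p : Fin kp → ℝ := fun i => ∑ j : Fin d, Q i j ^ 2 with hp
  have hp0 : ∀ i, 0 ≤ p i := fun i => Finset.sum_nonneg fun j _ => sq_nonneg _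
  have hS : ∀ i : Fin kp, (Q * Qᵀ) i i = p i := by
    intro i
    rw [Matrix.mul_apply]
    apply Finset.sum_congr rfl
    intro j _
    rw [Matrix.transpose_apply, sq]
  have hSi : (Q * Qᵀ) * (Q * Qᵀ) = Q * Qᵀ := by
    rw [Matrix.mul_assoc, ← Matrix.mul_assoc Qᵀ, hQ, Matrix.one_mul]
  have hp1 : ∀ i, p i ≤ 1 := by
    intro i
    have hdiag : (Q * Qᵀ) i i = ∑ t, (Q * Qᵀ) i t * (Q * Qᵀ) t i := by
      conv_lhs => rw [← hSi]
      rw [Matrix.mul_apply]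
    have hsym : ∀ t, (Q * Qᵀ) t i = (Q * Qᵀ) i t := by
      intro t
      rw [Matrix.mul_apply, Matrix.mul_apply]
      apply Finset.sum_congr rfl
      intro j _
      rw [Matrix.transpose_apply, Matrix.transpose_apply, mul_comm]
    have h3 : (Q * Qᵀ) i i = ∑ t, (Q * Qᵀ) i t ^ 2 := by
      rw [hdiag]
      apply Finset.sum_congr rfl
      intro t _
      rw [hsym t, sq]
    have h4 : (Q * Qᵀ) i i ^ 2 ≤ (Q * Qᵀ) i i := by
      conv_rhs => rw [h3]
      exact Finset.single_le_sum (f := fun t => (Q * Qᵀ) i t ^ 2)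
        (fun t _ => sq_nonneg _) (Finset.mem_univ i)
    have h5 := hp0 i
    rw [hS i] at h4
    nlinarith
  have hptot : ∑ i : Fin kp, p i = (d : ℝ) := by
    have : ∑ i : Fin kp, p i = ∑ j : Fin d, (Qᵀ * Q) j j := by
      simp_rw [hp, Matrix.mul_apply, Matrix.transpose_apply, sq]
      rw [Finset.sum_comm]
    rw [this, hQ]
    simp [Matrix.one_apply]
  -- convert to range sums and apply scalar_min
  set pn : ℕ → ℝ := fun i => if h : i < kp then p ⟨i, h⟩ else 0 with hpn
  have hconv : ∀ f : Fin kp → ℝ, (∀ i : Fin kp, f i = (fun n : ℕ =>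
      if h : n < kp then f ⟨n, h⟩ else 0) (i : ℕ)) := by
    intro f i
    simp [i.isLt]
  have hr1 : ∑ i : Fin kp, σ (i : ℕ) ^ 2 * p i
      = ∑ i ∈ Finset.range kp, σ i ^ 2 * pn i := by
    rw [← Fin.sum_univ_eq_sum_range (fun n => σ n ^ 2 * pn n) kp]
    apply Finset.sum_congr rfl
    intro i _
    rw [hpn]
    simp [i.isLt]
  have hscal := scalar_min hmkp (fun i => σ i ^ 2) pn
    (fun i j hij => by
      have := hσ hij
      exact pow_le_pow_left₀ (hσ0 j) this 2)
    (fun i => sq_nonneg _)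
    (fun i => by
      rw [hpn]
      by_cases h : i < kp
      · simpa [h] using hp0 ⟨i, h⟩
      · simp [h])
    (fun i => by
      rw [hpn]
      by_cases h : i < kp
      · simpa [h] using hp1 ⟨i, h⟩
      · simp [h])
    (by
      have : ∑ i ∈ Finset.range kp, pn i = ∑ i : Fin kp, p i := by
        rw [← Fin.sum_univ_eq_sum_range pn kp]
        apply Finset.sum_congr rfl
        intro i _
        rw [hpn]
        simp [i.isLt]
      rw [this, hptot]
      have : (kp : ℝ) ≤ (d : ℝ) + (mm : ℝ) := by
        have := hd
        have h2 : kp ≤ d + mm := by omega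
        exact_mod_cast h2
      linarith)
  calc ∑ i ∈ Finset.range kp, (if mm ≤ i then σ i ^ 2 else 0)
      ≤ ∑ i ∈ Finset.range kp, σ i ^ 2 * pn i := hscal
    _ = ∑ i : Fin kp, σ (i : ℕ) ^ 2 * p i := hr1.symm
    _ = frobSq (rectDiag L kp σ * Q) := h2.symm
    _ ≤ frobSq M := h1

lemma frobSq_rectDiag {L k : ℕ} (h : k ≤ L) (τ : ℕ → ℝ) :
    frobSq (rectDiag L k τ) = ∑ i ∈ Finset.range k, τ i ^ 2 := by
  have heq : rectDiag L k τ = emb L k * (Matrix.diagonal (fun j : Fin k => τ (j : ℕ)) * 1) := by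
    rw [Matrix.mul_one, rectDiag_eq_emb_mul]
  rw [heq, frobSq_mul_semiorth_left (emb L k) (emb_tr_mul_emb h), frobSq_diag_mul]
  rw [← Fin.sum_univ_eq_sum_range (fun n => τ n ^ 2) k]
  apply Finset.sum_congr rfl
  intro i _
  have hone : ∑ j : Fin k, ((1 : Matrix (Fin k) (Fin k) ℝ) i j) ^ 2 = 1 := by
    simp [Matrix.one_apply, ite_pow]
  rw [hone, mul_one]

/-- Nested/Matryoshka optimality: for each `1 ≤ m ≤ k_p − k_r`, the projected
residual `H_res^{(m)} = R V_m` gives an optimal `m`-dimensional augmentation of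
`H_r`, and `H_res^{(m)}` is the matrix of first `m` columns of `H_res^{(m')}`
for every `m' ≥ m`; so each prefix of the reverse-distilled embedding is itself
an optimal representation at its dimension. -/
theorem matryoshka_optimality {L kr kp : ℕ}
    (Hr : Matrix (Fin L) (Fin kr) ℝ) (Hp : Matrix (Fin L) (Fin kp) ℝ)
    (hk : kr < kp) (hL : kp ≤ L) (hrank : Hr.rank = kr)
    (Wstar : Matrix (Fin kr) (Fin kp) ℝ)
    (hW : Wstar = (Hrᵀ * Hr)⁻¹ * Hrᵀ * Hp)
    (R : Matrix (Fin L) (Fin kp) ℝ)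
    (hR : R = Hp - Hr * Wstar)
    (U : Matrix (Fin L) (Fin L) ℝ) (V : Matrix (Fin kp) (Fin kp) ℝ) (σ : ℕ → ℝ)
    (hU : Uᵀ * U = 1) (hU' : U * Uᵀ = 1)
    (hV : Vᵀ * V = 1) (hV' : V * Vᵀ = 1)
    (hσ : Antitone σ) (hσ0 : ∀ i, 0 ≤ σ i)
    (hSVD : R = U * rectDiag L kp σ * Vᵀ)
    (m : ℕ) (hm1 : 1 ≤ m) (hm : m ≤ kp - kr) :
    (∀ X : Matrix (Fin L) (Fin m) ℝ,
      sInf (Set.range fun A : Matrix (Fin kr ⊕ Fin m) (Fin kp) ℝ =>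
          frobSq (Hp - fromCols Hr (R * V.submatrix id (Fin.castLE (hm.trans (Nat.sub_le kp kr)))) * A)) ≤
        sInf (Set.range fun A : Matrix (Fin kr ⊕ Fin m) (Fin kp) ℝ =>
          frobSq (Hp - fromCols Hr X * A))) ∧
    (∀ m' : ℕ, ∀ hmm' : m ≤ m', ∀ hm' : m' ≤ kp,
      (R * V.submatrix id (Fin.castLE hm')).submatrix id (Fin.castLE hmm') =
        R * V.submatrix id (Fin.castLE (hm.trans (Nat.sub_le kp kr)))) := by
  have hmkp : m ≤ kp := hm.trans (Nat.sub_le kp kr)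
  set T : ℝ := ∑ i ∈ Finset.range kp, (if m ≤ i then σ i ^ 2 else 0) with hT
  -- invertibility of Hrᵀ * Hr
  have hBrank : (Hrᵀ * Hr).rank = kr := by rw [Matrix.rank_transpose_mul_self, hrank]
  have hBdet : IsUnit (Hrᵀ * Hr).det := by
    rw [← Matrix.isUnit_iff_isUnit_det, ← Matrix.mulVec_surjective_iff_isUnit]
    have htop : LinearMap.range (Hrᵀ * Hr).mulVecLin = ⊤ := by
      apply Submodule.eq_top_of_finrank_eq
      have : Module.finrank ℝ (LinearMap.range (Hrᵀ * Hr).mulVecLin) = (Hrᵀ * Hr).rank := rfl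
      rw [this, hBrank]
      simp [Module.finrank_pi]
    have hsurj : Function.Surjective (Hrᵀ * Hr).mulVecLin := LinearMap.range_eq_top.mp htop
    intro y
    obtain ⟨x, hx⟩ := hsurj y
    exact ⟨x, by rw [← Matrix.mulVecLin_apply]; exact hx⟩
  set B := Hrᵀ * Hr with hB
  have hBi : B⁻¹ * B = 1 := Matrix.nonsing_inv_mul B hBdet
  have hBsym : Bᵀ = B := by rw [hB, Matrix.transpose_mul, Matrix.transpose_transpose]
  have hBisym : (B⁻¹)ᵀ = B⁻¹ := by rw [Matrix.transpose_nonsing_inv, hBsym]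
  set P : Matrix (Fin L) (Fin L) ℝ := 1 - Hr * B⁻¹ * Hrᵀ with hP
  have hPs : Pᵀ = P := by
    rw [hP, Matrix.transpose_sub, Matrix.transpose_one, Matrix.transpose_mul,
      Matrix.transpose_mul, Matrix.transpose_transpose, hBisym, Matrix.mul_assoc]
  have hPHr : P * Hr = 0 := by
    have h1 : Hr * B⁻¹ * Hrᵀ * Hr = Hr := by
      rw [Matrix.mul_assoc (Hr * B⁻¹), ← hB, Matrix.mul_assoc Hr, hBi, Matrix.mul_one]
    rw [hP, Matrix.sub_mul, Matrix.one_mul, h1, sub_self]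
  have hPi : P * P = P := by
    have h2 : P * (Hr * B⁻¹ * Hrᵀ) = 0 := by
      calc P * (Hr * B⁻¹ * Hrᵀ) = (P * Hr) * (B⁻¹ * Hrᵀ) := by
            simp only [Matrix.mul_assoc]
        _ = 0 := by rw [hPHr, Matrix.zero_mul]
    calc P * P = P * 1 - P * (Hr * B⁻¹ * Hrᵀ) := by rw [← Matrix.mul_sub, ← hP]
      _ = P := by rw [h2, Matrix.mul_one, sub_zero]
  have hPHp : P * Hp = R := by
    rw [hP, Matrix.sub_mul, Matrix.one_mul, hR, hW]
    simp only [Matrix.mul_assoc]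
  -- the universal lower bound
  have hlow : ∀ (Y : Matrix (Fin L) (Fin m) ℝ) (A : Matrix (Fin kr ⊕ Fin m) (Fin kp) ℝ),
      T ≤ frobSq (Hp - fromCols Hr Y * A) := by
    intro Y A
    have hdecomp : fromCols Hr Y * A = Hr * A.toRows₁ + Y * A.toRows₂ := by
      conv_lhs => rw [← Matrix.fromRows_toRows A]
      rw [Matrix.fromCols_mul_fromRows]
    have hPE : P * (Hp - fromCols Hr Y * A) = R - (P * Y) * A.toRows₂ := by
      rw [hdecomp, Matrix.mul_sub, Matrix.mul_add, hPHp]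
      rw [← Matrix.mul_assoc, hPHr, Matrix.zero_mul, zero_add, ← Matrix.mul_assoc]
    have hfact : R - (P * Y) * A.toRows₂
        = U * (rectDiag L kp σ - (Uᵀ * (P * Y)) * (A.toRows₂ * V)) * Vᵀ := by
      have h3 : U * (rectDiag L kp σ - (Uᵀ * (P * Y)) * (A.toRows₂ * V)) * Vᵀ
          = U * rectDiag L kp σ * Vᵀ - U * ((Uᵀ * (P * Y)) * (A.toRows₂ * V)) * Vᵀ := by
        rw [Matrix.mul_sub U (rectDiag L kp σ), Matrix.sub_mul]
      rw [h3, ← hSVD]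
      congr 1
      calc (P * Y) * A.toRows₂ = (U * Uᵀ) * ((P * Y) * A.toRows₂ * (V * Vᵀ)) := by
            rw [hU', hV', Matrix.one_mul, Matrix.mul_one]
        _ = U * ((Uᵀ * (P * Y)) * (A.toRows₂ * V)) * Vᵀ := by
            simp only [Matrix.mul_assoc]
    have hEY := eckart_young_diag hL σ hσ hσ0 hmkp (Uᵀ * (P * Y)) (A.toRows₂ * V)
    have hinv : frobSq (rectDiag L kp σ - (Uᵀ * (P * Y)) * (A.toRows₂ * V))
        = frobSq (R - (P * Y) * A.toRows₂) := by
      rw [hfact, frobSq_mul_orth_right V hV (U * (rectDiag L kp σ - Uᵀ * (P * Y) * (A.toRows₂ * V))),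
        frobSq_mul_semiorth_left U hU]
    have hproj := frobSq_proj_le P hPs hPi (Hp - fromCols Hr Y * A)
    have hnn := frobSq_nonneg ((1 - P) * (Hp - fromCols Hr Y * A))
    rw [hPE] at hproj
    rw [hT]
    calc ∑ i ∈ Finset.range kp, (if m ≤ i then σ i ^ 2 else 0)
        ≤ frobSq (rectDiag L kp σ - (Uᵀ * (P * Y)) * (A.toRows₂ * V)) := hEY
      _ = frobSq (R - (P * Y) * A.toRows₂) := hinv
      _ ≤ frobSq (Hp - fromCols Hr Y * A) := by linarith
  -- the witness achieving T
  have hwit : frobSq (Hp - fromCols Hr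
        (R * V.submatrix id (Fin.castLE (hm.trans (Nat.sub_le kp kr)))) *
        fromRows Wstar (V.submatrix id (Fin.castLE (hm.trans (Nat.sub_le kp kr))))ᵀ) = T := by
    set Vm := V.submatrix id (Fin.castLE (hm.trans (Nat.sub_le kp kr))) with hVm
    have hVmE : Vm = V * emb kp m := submatrix_eq_mul_emb V hmkp
    have hdec : fromCols Hr (R * Vm) * fromRows Wstar Vmᵀ
        = Hr * Wstar + (R * Vm) * Vmᵀ := Matrix.fromCols_mul_fromRows _ _ _ _
    have hRVm : R * Vm = U * rectDiag L m σ := by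
      rw [hVmE, hSVD, ← rectDiag_mul_emb hmkp σ]
      rw [Matrix.mul_assoc (U * rectDiag L kp σ), ← Matrix.mul_assoc Vᵀ, hV, Matrix.one_mul]
      rw [Matrix.mul_assoc]
    have hkey : Hp - fromCols Hr (R * Vm) * fromRows Wstar Vmᵀ
        = U * rectDiag L kp (fun i => if i < m then 0 else σ i) * Vᵀ := by
      rw [hdec, sub_add_eq_sub_sub, ← hR, hRVm, hVmE, Matrix.transpose_mul]
      rw [hSVD]
      rw [show U * rectDiag L m σ * ((emb kp m)ᵀ * Vᵀ)
          = U * (rectDiag L m σ * (emb kp m)ᵀ) * Vᵀ by simp only [Matrix.mul_assoc]]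
      rw [← Matrix.sub_mul, ← Matrix.mul_sub, rectDiag_sub_mul_embT]
    rw [hkey, frobSq_mul_orth_right V hV (U * rectDiag L kp (fun i => if i < m then 0 else σ i)),
      frobSq_mul_semiorth_left U hU, frobSq_rectDiag hL, hT]
    apply Finset.sum_congr rfl
    intro i _
    by_cases h : i < m
    · rw [if_pos h, if_neg (by omega)]
      norm_num
    · rw [if_neg h, if_pos (by omega)]
  constructor
  · intro X
    have hbdd : BddBelow (Set.range fun A : Matrix (Fin kr ⊕ Fin m) (Fin kp) ℝ =>
        frobSq (Hp - fromCols Hr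
          (R * V.submatrix id (Fin.castLE (hm.trans (Nat.sub_le kp kr)))) * A)) := by
      refine ⟨0, ?_⟩
      rintro y ⟨A, rfl⟩
      exact frobSq_nonneg _
    have h1 : sInf (Set.range fun A : Matrix (Fin kr ⊕ Fin m) (Fin kp) ℝ =>
        frobSq (Hp - fromCols Hr
          (R * V.submatrix id (Fin.castLE (hm.trans (Nat.sub_le kp kr)))) * A)) ≤ T :=
      csInf_le hbdd
        ⟨fromRows Wstar (V.submatrix id (Fin.castLE (hm.trans (Nat.sub_le kp kr))))ᵀ, hwit⟩
    have h2 : T ≤ sInf (Set.range fun A : Matrix (Fin kr ⊕ Fin m) (Fin kp) ℝ =>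
        frobSq (Hp - fromCols Hr X * A)) := by
      apply le_csInf (Set.range_nonempty _)
      rintro y ⟨A, rfl⟩
      exact hlow X A
    linarith
  · intro m' hmm' hm'
    ext i j
    rfl
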